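/- Let n ≥ 2, let k be an integer with 2 ≤ k ≤ n, and let p = (p_1,…,p_n) ∈ [0,1]^n with 0 ≤ p_1 ≤ p_2 ≤ … ≤ p_n ≤ 1. Let r be an integer with 0 ≤ r ≤ k−1 and suppose S_{1r} > 0. Then for every pairwise independent distribution θ with marginal vector p: (i) if n − r − S_{1r} > 0 and ((n−r−1)·S_{1r} − 2·S_{2r})/(n − r − S_{1r}) ≤ k − r < 1 + 2·S_{2r}/S_{1r}, then P_θ(∑_{i=1}^n c_i ≥ k) ≤ ( (k + n − 2r − 1)·S_{1r} − 2·S_{2r} ) / ( (k−r)(n−r) ); and (ii) if k − r ≥ 1 + 2·S_{2r}/S_{1r} and k − r − S_{1r} > 0, then with i = ⌈( (k−r−1)·S_{1r} − 2·S_{2r} ) / ( k − r − S_{1r} )⌉, P_θ(∑_{i=1}^n c_i ≥ k) ≤ ( (i−1)(i − 2·S_{1r}) + 2·S_{2r} ) / ( (k−r−i)^2 + (k−r−i) ). -/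

import Mathlib

open Finset

noncomputable section

/-- Probability that at least `k` of the `n` coordinates equal `1` under the pmf `θ` on `{0,1}^n`. -/
def probGE (n : ℕ) (θ : (Fin n → Bool) → ℝ) (k : ℕ) : ℝ :=
  ∑ c ∈ Finset.univ.filter
      (fun c : Fin n → Bool => k ≤ (Finset.univ.filter (fun i => c i = true)).card), θ c

/-- Probability that all `n` coordinates equal `1` under the pmf `θ` on `{0,1}^n`. -/
def probAll (n : ℕ) (θ : (Fin n → Bool) → ℝ) : ℝ :=
  ∑ c ∈ Finset.univ.filter (fun c : Fin n → Bool => ∀ i, c i = true), θ c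

/-- `θ` is a probability mass function on `{0,1}^n`. -/
def IsDist (n : ℕ) (θ : (Fin n → Bool) → ℝ) : Prop :=
  (∀ c, 0 ≤ θ c) ∧ (∑ c, θ c = 1)

/-- Univariate marginal probability `P_θ(c_i = 1)`. -/
def Marg (n : ℕ) (θ : (Fin n → Bool) → ℝ) (i : Fin n) : ℝ :=
  ∑ c ∈ Finset.univ.filter (fun c : Fin n → Bool => c i = true), θ c

/-- Bivariate probability `P_θ(c_i = 1, c_j = 1)`. -/
def Biv (n : ℕ) (θ : (Fin n → Bool) → ℝ) (i j : Fin n) : ℝ :=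
  ∑ c ∈ Finset.univ.filter (fun c : Fin n → Bool => c i = true ∧ c j = true), θ c

/-- `θ` is a pairwise independent distribution with marginal vector `p`. -/
def PairwiseIndep (n : ℕ) (p : Fin n → ℝ) (θ : (Fin n → Bool) → ℝ) : Prop :=
  IsDist n θ ∧ (∀ i, Marg n θ i = p i) ∧
    (∀ i j : Fin n, i < j → Biv n θ i j = p i * p j)

/-! ### Auxiliary lemmas -/

lemma aux_tri_swap {ι : Type*} [LinearOrder ι] (s : Finset ι) (g : ι → ι → ℝ) :
    ∑ i ∈ s, ∑ j ∈ s.filter (fun j => i < j), g i j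
      = ∑ j ∈ s, ∑ i ∈ s.filter (fun i => i < j), g i j := by
  apply Finset.sum_comm'
  intro i j
  simp only [mem_filter]
  tauto

lemma aux_double_sum_eq {ι : Type*} [LinearOrder ι] (s : Finset ι) (g : ι → ι → ℝ)
    (hsym : ∀ i j, g i j = g j i) :
    ∑ i ∈ s, ∑ j ∈ s, g i j
      = 2 * (∑ i ∈ s, ∑ j ∈ s.filter (fun j => i < j), g i j) + ∑ i ∈ s, g i i := by
  classical
  have h1 : ∀ i ∈ s, ∑ j ∈ s, g i j
      = ∑ j ∈ s.filter (fun j => i < j), g i j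
        + (∑ j ∈ s.filter (fun j => j < i), g i j + g i i) := by
    intro i hi
    rw [← Finset.sum_filter_add_sum_filter_not s (fun j => i < j)]
    congr 1
    have hfe : s.filter (fun j => ¬ i < j) = insert i (s.filter (fun j => j < i)) := by
      ext x
      simp only [mem_filter, mem_insert, not_lt]
      constructor
      · rintro ⟨hx, hle⟩
        rcases eq_or_lt_of_le hle with h | h
        · exact Or.inl h
        · exact Or.inr ⟨hx, h⟩
      · rintro (rfl | ⟨hx, hlt⟩)
        · exact ⟨hi, le_refl _⟩
        · exact ⟨hx, hlt.le⟩
    rw [hfe, Finset.sum_insert (by simp)]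
    ring
  rw [Finset.sum_congr rfl h1, Finset.sum_add_distrib, Finset.sum_add_distrib]
  have h2 : ∑ i ∈ s, ∑ j ∈ s.filter (fun j => j < i), g i j
      = ∑ i ∈ s, ∑ j ∈ s.filter (fun j => i < j), g i j := by
    have : ∑ i ∈ s, ∑ j ∈ s.filter (fun j => j < i), g i j
        = ∑ i ∈ s, ∑ j ∈ s.filter (fun j => j < i), g j i :=
      Finset.sum_congr rfl fun i _ => Finset.sum_congr rfl fun j _ => hsym i j
    rw [this, ← aux_tri_swap s g]
  rw [h2]; ring

lemma aux_sq_expand {ι : Type*} [LinearOrder ι] (s : Finset ι) (f : ι → ℝ) :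
    (∑ i ∈ s, f i) ^ 2
      = ∑ i ∈ s, (f i) ^ 2 + 2 * ∑ i ∈ s, ∑ j ∈ s.filter (fun j => i < j), f i * f j := by
  have h := aux_double_sum_eq s (fun i j => f i * f j) (fun i j => mul_comm _ _)
  have hs : (∑ i ∈ s, f i) ^ 2 = ∑ i ∈ s, ∑ j ∈ s, f i * f j := by
    rw [sq, Finset.sum_mul_sum]
  rw [hs, h]
  simp only [← sq]
  ring

lemma aux_frac {ι : Type*} (s : Finset ι) (p : ι → ℝ)
    (hp : ∀ i ∈ s, 0 ≤ p i ∧ p i ≤ 1) :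
    ∀ q : ℤ, (q : ℝ) ≤ ∑ i ∈ s, p i → (∑ i ∈ s, p i) ≤ q + 1 →
      ((∑ i ∈ s, p i) - q) * (q + 1 - ∑ i ∈ s, p i) ≤ ∑ i ∈ s, p i * (1 - p i) := by
  induction s using Finset.cons_induction with
  | empty =>
    intro q h1 h2
    simp only [Finset.sum_empty] at *
    have hZ : (0:ℤ) ≤ q * (q + 1) := by
      rcases le_or_gt 0 q with h | h
      · nlinarith
      · nlinarith [Int.lt_iff_add_one_le.mp h]
    have : (0:ℝ) ≤ (q:ℝ) * ((q:ℝ) + 1) := by exact_mod_cast hZ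
    nlinarith
  | cons a s ha ih =>
    intro q h1 h2
    rw [Finset.sum_cons] at h1 h2 ⊢
    rw [Finset.sum_cons]
    have hpa := hp a (Finset.mem_cons_self a s)
    have hps : ∀ i ∈ s, 0 ≤ p i ∧ p i ≤ 1 := fun i hi => hp i (Finset.mem_cons_of_mem hi)
    have ih' := ih hps
    set S' := ∑ i ∈ s, p i with hS'
    rcases le_or_gt (q:ℝ) S' with hc | hc
    · have h3 := ih' q hc (by nlinarith [hpa.1])
      nlinarith [hpa.1, hpa.2, h3, mul_nonneg (sub_nonneg.mpr hc) hpa.1]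
    · have hq1 : ((q - 1 : ℤ) : ℝ) ≤ S' := by push_cast; nlinarith [hpa.2]
      have hq2 : S' ≤ ((q - 1 : ℤ) : ℝ) + 1 := by push_cast; nlinarith
      have h3 := ih' (q - 1) hq1 hq2
      push_cast at h3
      nlinarith [hpa.1, hpa.2,
        mul_nonneg (sub_nonneg.mpr (le_of_lt hc)) hpa.1]

lemma aux_card_filter_fin_lt (n N : ℕ) :
    (Finset.univ.filter (fun i : Fin n => (i:ℕ) < N)).card = min N n := by
  have e1 : (Finset.univ.filter (fun i : Fin n => (i:ℕ) < N)).card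
      = ((Finset.range n).filter (fun i => i < N)).card := by
    rw [Finset.card_filter, Finset.card_filter,
      ← Fin.sum_univ_eq_sum_range (fun i => if i < N then 1 else 0) n]
  have e2 : (Finset.range n).filter (fun i => i < N) = Finset.range (min N n) := by
    ext x; simp only [Finset.mem_filter, Finset.mem_range]; omega
  rw [e1, e2, Finset.card_range]

lemma aux_E1 (n : ℕ) (θ : (Fin n → Bool) → ℝ) (T : Finset (Fin n)) :
    ∑ c : Fin n → Bool, θ c * ((T.filter (fun i => c i = true)).card : ℝ)
      = ∑ i ∈ T, Marg n θ i := by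
  have h : ∀ c : Fin n → Bool, θ c * ((T.filter (fun i => c i = true)).card : ℝ)
      = ∑ i ∈ T, (if c i = true then θ c else 0) := by
    intro c
    rw [Finset.card_filter]
    push_cast
    rw [Finset.mul_sum]
    exact Finset.sum_congr rfl (by intro i _; split <;> simp)
  simp_rw [h]
  rw [Finset.sum_comm]
  exact Finset.sum_congr rfl (by intro i _; rw [Marg, Finset.sum_filter])

lemma aux_E2 (n : ℕ) (θ : (Fin n → Bool) → ℝ) (T : Finset (Fin n)) :
    ∑ c : Fin n → Bool,
        θ c * (((T.filter (fun i => c i = true)).card : ℝ)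
          * (((T.filter (fun i => c i = true)).card : ℝ) - 1))
      = 2 * ∑ i ∈ T, ∑ j ∈ T.filter (fun j => i < j), Biv n θ i j := by
  have hcard : ∀ c : Fin n → Bool,
      ((T.filter (fun i => c i = true)).card : ℝ)
        * (((T.filter (fun i => c i = true)).card : ℝ) - 1)
      = 2 * ∑ i ∈ T, ∑ j ∈ T.filter (fun j => i < j),
          (if c i = true ∧ c j = true then (1:ℝ) else 0) := by
    intro c
    have hY : ((T.filter (fun i => c i = true)).card : ℝ)
        = ∑ i ∈ T, (if c i = true then (1:ℝ) else 0) := by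
      rw [Finset.card_filter]; push_cast; rfl
    have hse := aux_sq_expand T (fun i => if c i = true then (1:ℝ) else 0)
    have hsq : ∀ i : Fin n, (if c i = true then (1:ℝ) else 0) ^ 2
        = (if c i = true then (1:ℝ) else 0) := by intro i; split <;> norm_num
    simp_rw [hsq] at hse
    have hmul : ∀ i j : Fin n,
        (if c i = true then (1:ℝ) else 0) * (if c j = true then (1:ℝ) else 0)
        = (if c i = true ∧ c j = true then (1:ℝ) else 0) := by
      intro i j; by_cases h1 : c i = true <;> by_cases h2 : c j = true <;> simp [h1, h2]
    simp_rw [hmul] at hse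
    rw [hY] at *
    nlinarith [hse]
  simp_rw [hcard]
  have h2 : ∀ c : Fin n → Bool,
      θ c * (2 * ∑ i ∈ T, ∑ j ∈ T.filter (fun j => i < j),
          (if c i = true ∧ c j = true then (1:ℝ) else 0))
      = 2 * ∑ i ∈ T, ∑ j ∈ T.filter (fun j => i < j),
          (if c i = true ∧ c j = true then θ c else 0) := by
    intro c
    rw [mul_left_comm]
    congr 1
    rw [Finset.mul_sum]
    refine Finset.sum_congr rfl fun i _ => ?_
    rw [Finset.mul_sum]
    refine Finset.sum_congr rfl fun j _ => ?_
    split <;> simp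
  simp_rw [h2]
  rw [← Finset.mul_sum]
  congr 1
  rw [Finset.sum_comm]
  refine Finset.sum_congr rfl fun i _ => ?_
  rw [Finset.sum_comm]
  refine Finset.sum_congr rfl fun j _ => ?_
  rw [Biv, Finset.sum_filter]


lemma aux_g1 (m N y : ℕ) (hm : 0 < m) (hN : 0 < N) :
    0 + (((m:ℝ) + N - 1) / ((m:ℝ) * N)) * y + (-1 / ((m:ℝ) * N)) * ((y:ℝ) * ((y:ℝ) - 1))
      = ((y:ℝ) * ((m:ℝ) + (N:ℝ) - (y:ℝ))) / ((m:ℝ) * (N:ℝ)) := by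
  have h1 : ((m:ℝ) * N) ≠ 0 := by positivity
  field_simp
  ring

lemma aux_g1_nonneg (m N y : ℕ) (hm : 0 < m) (hN : 0 < N) (hy : y ≤ N) :
    0 ≤ ((y:ℝ) * ((m:ℝ) + (N:ℝ) - (y:ℝ))) / ((m:ℝ) * (N:ℝ)) := by
  have hyR : (y:ℝ) ≤ (N:ℝ) := by exact_mod_cast hy
  have h0 : (0:ℝ) ≤ (y:ℝ) := Nat.cast_nonneg y
  have hm' : (0:ℝ) < (m:ℝ) := by exact_mod_cast hm
  have hN' : (0:ℝ) < (N:ℝ) := by exact_mod_cast hN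
  apply div_nonneg _ (by positivity)
  nlinarith

lemma aux_g1_one (m N y : ℕ) (hm : 0 < m) (hN : 0 < N) (hy : y ≤ N) (hmy : m ≤ y) :
    1 ≤ ((y:ℝ) * ((m:ℝ) + (N:ℝ) - (y:ℝ))) / ((m:ℝ) * (N:ℝ)) := by
  have hyR : (y:ℝ) ≤ (N:ℝ) := by exact_mod_cast hy
  have hmyR : (m:ℝ) ≤ (y:ℝ) := by exact_mod_cast hmy
  have hm' : (0:ℝ) < (m:ℝ) := by exact_mod_cast hm
  have hN' : (0:ℝ) < (N:ℝ) := by exact_mod_cast hN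
  rw [le_div_iff₀ (by positivity)]
  nlinarith [mul_nonneg (sub_nonneg.mpr hmyR) (sub_nonneg.mpr hyR)]

lemma aux_g2 (ic : ℤ) (y : ℕ) (Dr : ℝ) (hD : Dr ≠ 0) :
    ((ic:ℝ) * ((ic:ℝ) - 1)) / Dr + ((-2 * ((ic:ℝ) - 1)) / Dr) * y
      + (1 / Dr) * ((y:ℝ) * ((y:ℝ) - 1))
      = (((y:ℝ) - ic) * (((y:ℝ) - ic) + 1)) / Dr := by
  field_simp
  ring

lemma aux_g2_nonneg (ic : ℤ) (y : ℕ) (Dr : ℝ) (hD : 0 < Dr) :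
    0 ≤ (((y:ℝ) - ic) * (((y:ℝ) - ic) + 1)) / Dr := by
  apply div_nonneg _ (le_of_lt hD)
  have hz : (0:ℤ) ≤ ((y:ℤ) - ic) * (((y:ℤ) - ic) + 1) := by
    rcases le_or_gt 0 ((y:ℤ) - ic) with h | h
    · nlinarith
    · nlinarith [Int.lt_iff_add_one_le.mp h]
  have h2 : ((0:ℤ):ℝ) ≤ ((((y:ℤ) - ic) * (((y:ℤ) - ic) + 1) : ℤ):ℝ) := by exact_mod_cast hz
  push_cast at h2
  linarith

lemma aux_g2_one (ic : ℤ) (m y : ℕ) (hw : 1 ≤ (m:ℤ) - ic) (hmy : m ≤ y) :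
    1 ≤ (((y:ℝ) - ic) * (((y:ℝ) - ic) + 1))
        / (((m:ℝ) - ic) * (((m:ℝ) - ic) + 1)) := by
  have hwR : (1:ℝ) ≤ (m:ℝ) - ic := by
    have : ((1:ℤ):ℝ) ≤ (((m:ℤ) - ic : ℤ):ℝ) := by exact_mod_cast hw
    push_cast at this; linarith
  have hD : (0:ℝ) < ((m:ℝ) - ic) * (((m:ℝ) - ic) + 1) := by nlinarith
  rw [le_div_iff₀ hD]
  have hz : ((m:ℤ) - ic) * (((m:ℤ) - ic) + 1) ≤ ((y:ℤ) - ic) * (((y:ℤ) - ic) + 1) := by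
    have hmyZ : (m:ℤ) ≤ (y:ℤ) := by exact_mod_cast hmy
    nlinarith
  have h2 : ((((m:ℤ) - ic) * (((m:ℤ) - ic) + 1) : ℤ):ℝ)
      ≤ ((((y:ℤ) - ic) * (((y:ℤ) - ic) + 1) : ℤ):ℝ) := by exact_mod_cast hz
  push_cast at h2
  nlinarith [h2]

set_option maxHeartbeats 1600000 in
theorem stmt_9 (n k r : ℕ) (hn : 2 ≤ n) (hk2 : 2 ≤ k) (hkn : k ≤ n) (hr : r ≤ k - 1)
    (p : Fin n → ℝ)
    (hp0 : ∀ i, 0 ≤ p i) (hp1 : ∀ i, p i ≤ 1) (hmono : Monotone p)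
    (S1 S2 : ℝ)
    (hS1 : S1 = ∑ i ∈ Finset.univ.filter (fun i : Fin n => (i : ℕ) < n - r), p i)
    (hS2 : S2 = ∑ i ∈ Finset.univ.filter (fun i : Fin n => (i : ℕ) < n - r),
      ∑ j ∈ Finset.univ.filter (fun j : Fin n => i < j ∧ (j : ℕ) < n - r), p i * p j)
    (hS1pos : 0 < S1)
    (θ : (Fin n → Bool) → ℝ) (hθ : PairwiseIndep n p θ) :
    ((0 < (n : ℝ) - r - S1 →
      (((n : ℝ) - r - 1) * S1 - 2 * S2) / ((n : ℝ) - r - S1) ≤ (k : ℝ) - r →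
      (k : ℝ) - r < 1 + 2 * S2 / S1 →
      probGE n θ k ≤
        (((k : ℝ) + n - 2 * r - 1) * S1 - 2 * S2) / (((k : ℝ) - r) * ((n : ℝ) - r)))) ∧
    ((1 + 2 * S2 / S1 ≤ (k : ℝ) - r →
      0 < (k : ℝ) - r - S1 →
      ∀ ic : ℤ, ic = ⌈(((k : ℝ) - r - 1) * S1 - 2 * S2) / ((k : ℝ) - r - S1)⌉ →
      probGE n θ k ≤
        (((ic : ℝ) - 1) * ((ic : ℝ) - 2 * S1) + 2 * S2) /
          (((k : ℝ) - r - ic) ^ 2 + ((k : ℝ) - r - ic)))) := by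
  classical
  obtain ⟨⟨hθ0, hθsum⟩, hmarg, hbiv⟩ := hθ
  set T : Finset (Fin n) := Finset.univ.filter (fun i : Fin n => (i : ℕ) < n - r) with hT
  set m : ℕ := k - r with hm
  set N : ℕ := n - r with hN
  have hrk : r < k := by omega
  have hrn : r < n := by omega
  have hm1 : 1 ≤ m := by omega
  have hmN : m ≤ N := by omega
  have hcT : T.card = N := by
    rw [hT, aux_card_filter_fin_lt]; omega
  -- casts
  have hkrR : (k : ℝ) - r = (m : ℝ) := by
    rw [hm]; push_cast [Nat.cast_sub (le_of_lt hrk)]; ring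
  have hnrR : (n : ℝ) - r = (N : ℝ) := by
    rw [hN]; push_cast [Nat.cast_sub (le_of_lt hrn)]; ring
  -- the count Y
  set Y : (Fin n → Bool) → ℕ := fun c => (T.filter (fun i => c i = true)).card with hY
  -- S1 and S2 identities
  have hS1T : S1 = ∑ i ∈ T, p i := hS1
  have hS2T : S2 = ∑ i ∈ T, ∑ j ∈ T.filter (fun j => i < j), p i * p j := by
    rw [hS2]
    refine Finset.sum_congr rfl fun i _ => ?_
    apply Finset.sum_congr _ (fun j _ => rfl)
    ext j
    simp only [Finset.mem_filter, Finset.mem_univ, true_and, hT]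
    tauto
  -- expectations
  have hEY : ∑ c : Fin n → Bool, θ c * (Y c : ℝ) = S1 := by
    rw [hY, aux_E1, hS1T]
    exact Finset.sum_congr rfl fun i _ => hmarg i
  have hEY2 : ∑ c : Fin n → Bool, θ c * ((Y c : ℝ) * ((Y c : ℝ) - 1)) = 2 * S2 := by
    rw [hY, aux_E2, hS2T]
    congr 1
    refine Finset.sum_congr rfl fun i _ => Finset.sum_congr rfl fun j hj => ?_
    exact hbiv i j (Finset.mem_filter.mp hj).2
  -- Y bounds
  have hYle : ∀ c, Y c ≤ N := by
    intro c; rw [← hcT]; exact Finset.card_filter_le _ _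
  have hsub : ∀ c : Fin n → Bool,
      k ≤ (Finset.univ.filter (fun i => c i = true)).card → m ≤ Y c := by
    intro c hc
    have hsubs : Finset.univ.filter (fun i => c i = true)
        ⊆ (T.filter (fun i => c i = true)) ∪ Tᶜ := by
      intro x hx
      by_cases hxT : x ∈ T
      · exact Finset.mem_union_left _ (Finset.mem_filter.mpr ⟨hxT, (Finset.mem_filter.mp hx).2⟩)
      · exact Finset.mem_union_right _ (Finset.mem_compl.mpr hxT)
    have hcard := (Finset.card_le_card hsubs).trans (Finset.card_union_le _ _)
    have hcompl : Tᶜ.card = r := by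
      rw [Finset.card_compl, hcT]
      simp only [Fintype.card_fin]
      omega
    rw [hcompl] at hcard
    have hYc : (T.filter (fun i => c i = true)).card = Y c := rfl
    rw [hYc] at hcard
    omega
  -- the key LP bound
  have key : ∀ α β γ : ℝ,
      (∀ y : ℕ, y ≤ N → 0 ≤ α + β * y + γ * ((y:ℝ) * ((y:ℝ) - 1))) →
      (∀ y : ℕ, y ≤ N → m ≤ y → 1 ≤ α + β * y + γ * ((y:ℝ) * ((y:ℝ) - 1))) →
      probGE n θ k ≤ α + β * S1 + γ * (2 * S2) := by
    intro α β γ hg0 hg1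
    set g : (Fin n → Bool) → ℝ :=
      fun c => α + β * (Y c : ℝ) + γ * ((Y c : ℝ) * ((Y c : ℝ) - 1)) with hg
    have step1 : probGE n θ k ≤ ∑ c : Fin n → Bool, θ c * g c := by
      rw [probGE]
      have h1 : ∀ c ∈ Finset.univ.filter
          (fun c : Fin n → Bool => k ≤ (Finset.univ.filter (fun i => c i = true)).card),
          θ c ≤ θ c * g c := by
        intro c hc
        have hkc := (Finset.mem_filter.mp hc).2
        have h1g : 1 ≤ g c := hg1 (Y c) (hYle c) (hsub c hkc)
        nlinarith [hθ0 c]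
      refine (Finset.sum_le_sum h1).trans ?_
      refine Finset.sum_le_sum_of_subset_of_nonneg (Finset.filter_subset _ _) ?_
      intro c _ _
      exact mul_nonneg (hθ0 c) (hg0 (Y c) (hYle c))
    refine step1.trans_eq ?_
    have hexp : ∀ c : Fin n → Bool, θ c * g c
        = α * θ c + β * (θ c * (Y c : ℝ)) + γ * (θ c * ((Y c : ℝ) * ((Y c : ℝ) - 1))) := by
      intro c; rw [hg]; ring
    rw [Finset.sum_congr rfl (fun c _ => hexp c), Finset.sum_add_distrib,
      Finset.sum_add_distrib, ← Finset.mul_sum, ← Finset.mul_sum, ← Finset.mul_sum,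
      hθsum, hEY, hEY2]
    ring
  have hmpos : (0:ℝ) < (m:ℝ) := by exact_mod_cast hm1
  have hNpos : (0:ℝ) < (N:ℝ) := by exact_mod_cast lt_of_lt_of_le hm1 hmN
  have hmNR : (m:ℝ) ≤ (N:ℝ) := by exact_mod_cast hmN
  constructor
  · -- Part (i)
    intro _ _ _
    have hmN0 : (0:ℝ) < (m:ℝ) * (N:ℝ) := by positivity
    have hg0 : ∀ y : ℕ, y ≤ N →
        0 ≤ 0 + (((m:ℝ) + N - 1) / ((m:ℝ) * N)) * y
          + (-1 / ((m:ℝ) * N)) * ((y:ℝ) * ((y:ℝ) - 1)) := by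
      intro y hy
      rw [aux_g1 m N y hm1 (lt_of_lt_of_le hm1 hmN)]
      exact aux_g1_nonneg m N y hm1 (lt_of_lt_of_le hm1 hmN) hy
    have hg1 : ∀ y : ℕ, y ≤ N → m ≤ y →
        1 ≤ 0 + (((m:ℝ) + N - 1) / ((m:ℝ) * N)) * y
          + (-1 / ((m:ℝ) * N)) * ((y:ℝ) * ((y:ℝ) - 1)) := by
      intro y hy hmy
      rw [aux_g1 m N y hm1 (lt_of_lt_of_le hm1 hmN)]
      exact aux_g1_one m N y hm1 (lt_of_lt_of_le hm1 hmN) hy hmy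
    have hb := key 0 (((m:ℝ) + N - 1) / ((m:ℝ) * N)) (-1 / ((m:ℝ) * N)) hg0 hg1
    refine hb.trans_eq ?_
    rw [hkrR, hnrR]
    have hco : (k:ℝ) + n - 2 * r - 1 = (m:ℝ) + (N:ℝ) - 1 := by
      rw [← hkrR, ← hnrR]; ring
    rw [hco, zero_add, div_mul_eq_mul_div, div_mul_eq_mul_div, ← add_div]
    congr 1
    ring
  · -- Part (ii)
    intro hA hB ic hic
    rw [hkrR] at hB hic ⊢
    -- the sum of squares
    set Q : ℝ := ∑ i ∈ T, p i ^ 2 with hQdef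
    have hQ : S1 ^ 2 = Q + 2 * S2 := by
      rw [hS1T, hS2T, hQdef]
      exact aux_sq_expand T p
    have hsumId : ∑ i ∈ T, p i * (1 - p i) = S1 - Q := by
      rw [hS1T, hQdef, ← Finset.sum_sub_distrib]
      exact Finset.sum_congr rfl fun i _ => by ring
    have hQS1 : Q ≤ S1 := by
      have h1 : (0:ℝ) ≤ ∑ i ∈ T, p i * (1 - p i) :=
        Finset.sum_nonneg fun i _ => mul_nonneg (hp0 i) (by linarith [hp1 i])
      linarith [hsumId]
    have hineq : (S1 - ((m:ℝ) - 1)) * ((m:ℝ) - S1) ≤ S1 - Q := by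
      rcases le_or_gt ((m:ℝ) - 1) S1 with h | h
      · have hfr := aux_frac T p (fun i _ => ⟨hp0 i, hp1 i⟩) ((m:ℤ) - 1)
          (by push_cast; rw [← hS1T]; linarith)
          (by push_cast; rw [← hS1T]; linarith)
        rw [hsumId, ← hS1T] at hfr
        push_cast at hfr
        linarith
      · nlinarith
    have hicle : ic ≤ (m:ℤ) - 1 := by
      rw [hic]
      apply Int.ceil_le.mpr
      rw [div_le_iff₀ hB]
      push_cast
      nlinarith [hQ, hineq]
    have hwpos : (1:ℤ) ≤ (m:ℤ) - ic := by omega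
    have hicR : (ic:ℝ) ≤ (m:ℝ) - 1 := by exact_mod_cast hicle
    have hDpos : (0:ℝ) < ((m:ℝ) - ic) * (((m:ℝ) - ic) + 1) := by
      have h1 : (1:ℝ) ≤ (m:ℝ) - ic := by
        have : ((1:ℤ):ℝ) ≤ (((m:ℤ) - ic : ℤ):ℝ) := by exact_mod_cast hwpos
        push_cast at this; linarith
      nlinarith
    set Dr : ℝ := ((m:ℝ) - ic) * (((m:ℝ) - ic) + 1) with hDr
    have hDne : Dr ≠ 0 := ne_of_gt hDpos
    have hg0 : ∀ y : ℕ, y ≤ N →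
        0 ≤ ((ic:ℝ) * ((ic:ℝ) - 1)) / Dr + ((-2 * ((ic:ℝ) - 1)) / Dr) * y
          + (1 / Dr) * ((y:ℝ) * ((y:ℝ) - 1)) := by
      intro y _
      rw [aux_g2 ic y Dr hDne]
      exact aux_g2_nonneg ic y Dr hDpos
    have hg1 : ∀ y : ℕ, y ≤ N → m ≤ y →
        1 ≤ ((ic:ℝ) * ((ic:ℝ) - 1)) / Dr + ((-2 * ((ic:ℝ) - 1)) / Dr) * y
          + (1 / Dr) * ((y:ℝ) * ((y:ℝ) - 1)) := by
      intro y _ hmy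
      rw [aux_g2 ic y Dr hDne, hDr]
      exact aux_g2_one ic m y hwpos hmy
    have hb := key (((ic:ℝ) * ((ic:ℝ) - 1)) / Dr) ((-2 * ((ic:ℝ) - 1)) / Dr) (1 / Dr) hg0 hg1
    refine hb.trans_eq ?_
    have hden : ((m:ℝ) - ic) ^ 2 + ((m:ℝ) - ic) = Dr := by rw [hDr]; ring
    rw [hden, div_mul_eq_mul_div, one_div, inv_mul_eq_div, ← add_div, ← add_div]
    congr 1
    ring
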